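/- For an integer m ≥ 2, set a_i := m/(m+1) − i/(i+2) for 1 ≤ i ≤ m−1. Then the a_i are strictly decreasing in i, each a_i is strictly positive, a_{m−1} = 1/(m+1), and a_{m−1} < (m+3)/(2(m+1)). In particular, the m×m symmetric matrix L with entries L_{rs} = −1/(max(r,s) + max(r,s)²) for r ≠ s and L_{ss} = (s−1−s²)/(s+s²) + m/(m+1) is positive semidefinite, its smallest nonzero eigenvalue is 1/(m+1), and this is strictly smaller than (m+3)/(2(m+1)). -/

import Mathlib

open Finset Matrix

/-- A symmetric real matrix with zero row sums and nonpositive off-diagonal entries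
(a weighted graph Laplacian) is positive semidefinite. -/
lemma psd_of_laplacian {n : ℕ} (M : Matrix (Fin n) (Fin n) ℝ)
    (hsym : ∀ r s, M r s = M s r)
    (hrow : ∀ r, ∑ s, M r s = 0)
    (hoff : ∀ r s, r ≠ s → M r s ≤ 0) : M.PosSemidef := by
  have hcol : ∀ s, ∑ r, M r s = 0 := by
    intro s; simp_rw [fun r => hsym r s]; exact hrow s
  rw [Matrix.posSemidef_iff_dotProduct_mulVec]
  constructor
  · ext r s
    simp [Matrix.conjTranspose_apply, hsym r s]
  · intro x
    have quad : x ⬝ᵥ M.mulVec x = ∑ r, ∑ s, x r * (M r s * x s) := by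
      simp [dotProduct, Matrix.mulVec, Finset.mul_sum]
    have key : ∑ r, ∑ s, (-M r s) * (x r - x s) ^ 2 = 2 * (x ⬝ᵥ M.mulVec x) := by
      have expand : ∀ r s : Fin n, (-M r s) * (x r - x s) ^ 2
          = 2 * (x r * (M r s * x s)) - M r s * x r ^ 2 - M r s * x s ^ 2 := by
        intro r s; ring
      simp_rw [expand, Finset.sum_sub_distrib, ← Finset.mul_sum]
      have h1 : ∑ r, ∑ s, M r s * x r ^ 2 = 0 := by
        simp_rw [← Finset.sum_mul, hrow]
        simp
      have h2 : ∑ r : Fin n, ∑ s : Fin n, M r s * x s ^ 2 = 0 := by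
        rw [Finset.sum_comm]
        simp_rw [← Finset.sum_mul, hcol]
        simp
      rw [h1, h2, quad]
      simp [Finset.mul_sum, mul_assoc]
    have pos : 0 ≤ ∑ r, ∑ s, (-M r s) * (x r - x s) ^ 2 := by
      refine Finset.sum_nonneg fun r _ => Finset.sum_nonneg fun s _ => ?_
      rcases eq_or_ne r s with h | h
      · simp [h]
      · exact mul_nonneg (by linarith [hoff r s h]) (sq_nonneg _)
    have : (0:ℝ) ≤ x ⬝ᵥ M.mulVec x := by linarith [key ▸ pos]
    simpa using this




/-- The nonzero eigenvalues `a_i = m/(m+1) - i/(i+2)` of the Lichnerowicz Laplacian of the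
standard metric on the Ledger–Obata space `F^{m+1}/Δ^{m+1}F`. -/
noncomputable def LOeig (m i : ℕ) : ℝ := (m : ℝ) / ((m : ℝ) + 1) - (i : ℝ) / ((i : ℝ) + 2)

/-- The `m × m` matrix of the Lichnerowicz Laplacian of the standard metric on the
Ledger–Obata space `F^{m+1}/Δ^{m+1}F` (a Lean index `r : Fin m` corresponds to the paper
index `r + 1`). -/
noncomputable def Lmat (m : ℕ) : Matrix (Fin m) (Fin m) ℝ :=
  fun r s =>
    if r = s then
      (((s : ℕ) : ℝ) + 1 - 1 - (((s : ℕ) : ℝ) + 1) ^ 2) /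
          ((((s : ℕ) : ℝ) + 1) + (((s : ℕ) : ℝ) + 1) ^ 2) + (m : ℝ) / ((m : ℝ) + 1)
    else
      -1 / (((max (r : ℕ) (s : ℕ) : ℕ) : ℝ) + 1 + (((max (r : ℕ) (s : ℕ) : ℕ) : ℝ) + 1) ^ 2)

lemma woff (t : ℕ) : -1 / ((t:ℝ) + 1 + ((t:ℝ) + 1) ^ 2) = 1 / ((t:ℝ) + 2) - 1 / ((t:ℝ) + 1) := by
  have h1 : (0:ℝ) < (t:ℝ) + 1 := by positivity
  have h2 : (0:ℝ) < (t:ℝ) + 2 := by positivity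
  have h3 : (0:ℝ) < (t:ℝ) + 1 + ((t:ℝ) + 1) ^ 2 := by positivity
  field_simp
  ring

lemma lmat_rowsum (m : ℕ) (hm : 2 ≤ m) (r : Fin m) : ∑ s, Lmat m r s = 0 := by
  classical
  set R : ℕ := (r : ℕ) with hRdef
  have hRm : R < m := r.2
  set F : ℕ → ℝ := fun t =>
    if R = t then
      ((R:ℝ) + 1 - 1 - ((R:ℝ) + 1) ^ 2) / (((R:ℝ) + 1) + ((R:ℝ) + 1) ^ 2) + (m:ℝ) / ((m:ℝ) + 1)
    else -1 / (((max R t : ℕ):ℝ) + 1 + (((max R t : ℕ):ℝ) + 1) ^ 2) with hFdef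
  have hF : ∀ s : Fin m, Lmat m r s = F (s : ℕ) := by
    intro s
    by_cases h : r = s
    · subst h; simp [Lmat, F, hRdef]
    · have h' : R ≠ (s : ℕ) := fun hh => h (Fin.ext hh)
      simp [Lmat, F, h, h']
      rfl
  set G : ℕ → ℝ := fun k => 1 / ((k:ℝ) + 1) with hGdef
  have step1 : ∑ s : Fin m, Lmat m r s = ∑ t ∈ range m, F t := by
    rw [Finset.sum_congr rfl (fun s _ => hF s)]
    exact Fin.sum_univ_eq_sum_range F m
  have split : ∑ t ∈ range (R+1), F t + ∑ t ∈ Ico (R+1) m, F t = ∑ t ∈ range m, F t :=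
    Finset.sum_range_add_sum_Ico F (Nat.succ_le_of_lt hRm)
  have head : ∑ t ∈ range (R+1), F t
      = (R:ℝ) * (-1 / ((R:ℝ) + 1 + ((R:ℝ) + 1) ^ 2))
        + (((R:ℝ) + 1 - 1 - ((R:ℝ) + 1) ^ 2) / (((R:ℝ) + 1) + ((R:ℝ) + 1) ^ 2)
          + (m:ℝ) / ((m:ℝ) + 1)) := by
    rw [Finset.sum_range_succ]
    congr 1
    · have hc : ∀ t ∈ range R, F t = -1 / ((R:ℝ) + 1 + ((R:ℝ) + 1) ^ 2) := by
        intro t ht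
        have htR : t < R := mem_range.mp ht
        have h1 : R ≠ t := (Nat.ne_of_lt htR).symm
        have h2 : max R t = R := max_eq_left htR.le
        simp only [F, h1, if_false]
        rw [h2]
      rw [Finset.sum_congr rfl hc, Finset.sum_const, card_range, nsmul_eq_mul]
    · simp [F]
  have tail : ∑ t ∈ Ico (R+1) m, F t = G m - G (R+1) := by
    have hc : ∀ t ∈ Ico (R+1) m, F t = G (t+1) - G t := by
      intro t ht
      have htR : R < t := Nat.lt_of_succ_le (mem_Ico.mp ht).1
      have h1 : R ≠ t := Nat.ne_of_lt htR
      have h2 : max R t = t := max_eq_right htR.le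
      have : F t = -1 / ((t:ℝ) + 1 + ((t:ℝ) + 1) ^ 2) := by
        simp only [F, h1, if_false]
        rw [h2]
      rw [this, woff]
      simp only [G]
      push_cast
      ring
    rw [Finset.sum_congr rfl hc, Finset.sum_Ico_eq_sub _ (Nat.succ_le_of_lt hRm),
      Finset.sum_range_sub, Finset.sum_range_sub]
    ring
  have hGm : G m = 1 / ((m:ℝ) + 1) := rfl
  have hGR : G (R+1) = 1 / ((R:ℝ) + 2) := by simp only [G]; push_cast; ring_nf
  rw [step1, ← split, head, tail, hGm, hGR]
  have h1 : (0:ℝ) < (R:ℝ) + 1 := by positivity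
  have h2 : (0:ℝ) < (R:ℝ) + 2 := by positivity
  have h3 : (0:ℝ) < (R:ℝ) + 1 + ((R:ℝ) + 1) ^ 2 := by positivity
  have h4 : (0:ℝ) < (m:ℝ) + 1 := by positivity
  field_simp
  ring

lemma lmat_symm (m : ℕ) (r s : Fin m) : Lmat m r s = Lmat m s r := by
  rcases eq_or_ne r s with h | h
  · subst h; rfl
  · simp only [Lmat, h, h.symm, if_false]
    rw [max_comm]

lemma lmat_offdiag (m : ℕ) (r s : Fin m) (h : r ≠ s) : Lmat m r s ≤ 0 := by
  simp only [Lmat, h, if_false]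
  have : (0:ℝ) < ((max (r:ℕ) (s:ℕ) : ℕ):ℝ) + 1 + (((max (r:ℕ) (s:ℕ) : ℕ):ℝ) + 1) ^ 2 := by
    positivity
  apply div_nonpos_of_nonpos_of_nonneg <;> linarith

lemma lmat_psd (m : ℕ) (hm : 2 ≤ m) : (Lmat m).PosSemidef :=
  psd_of_laplacian _ (lmat_symm m) (lmat_rowsum m hm) (lmat_offdiag m)

/-- The shifted matrix `L - (1/(m+1)) (I - (1/m) J)`. -/
noncomputable def Lmat' (m : ℕ) : Matrix (Fin m) (Fin m) ℝ :=
  fun r s => Lmat m r s + (if r = s then -(1/((m:ℝ)+1)) else 0) + 1/((m:ℝ)*((m:ℝ)+1))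

lemma lmat'_psd (m : ℕ) (hm : 2 ≤ m) : (Lmat' m).PosSemidef := by
  have hm0 : (0:ℝ) < (m:ℝ) := by exact_mod_cast Nat.lt_of_lt_of_le Nat.zero_lt_two hm
  have hm1 : (0:ℝ) < (m:ℝ) + 1 := by linarith
  apply psd_of_laplacian
  · intro r s
    simp only [Lmat']
    rcases eq_or_ne r s with h | h
    · subst h; rfl
    · rw [lmat_symm, if_neg h, if_neg h.symm]
  · intro r
    simp only [Lmat']
    rw [Finset.sum_add_distrib, Finset.sum_add_distrib, lmat_rowsum m hm,
      Finset.sum_ite_eq Finset.univ r, Finset.sum_const, Finset.card_univ, Fintype.card_fin,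
      nsmul_eq_mul]
    simp only [Finset.mem_univ, if_true]
    field_simp
    ring
  · intro r s h
    simp only [Lmat', Lmat, h, if_false]
    set K : ℕ := max (r:ℕ) (s:ℕ) with hK
    have hKm : K < m := by
      have := r.2; have := s.2; omega
    have hK1 : (K:ℝ) + 1 ≤ (m:ℝ) := by exact_mod_cast Nat.succ_le_of_lt hKm
    have hKpos : (0:ℝ) < (K:ℝ) + 1 + ((K:ℝ) + 1) ^ 2 := by positivity
    have hle : (K:ℝ) + 1 + ((K:ℝ) + 1) ^ 2 ≤ (m:ℝ) * ((m:ℝ) + 1) := by nlinarith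
    have h1 : 1/((m:ℝ)*((m:ℝ)+1)) ≤ 1/((K:ℝ) + 1 + ((K:ℝ) + 1) ^ 2) :=
      one_div_le_one_div_of_le hKpos hle
    have h2 : -1 / ((K:ℝ) + 1 + ((K:ℝ) + 1) ^ 2) = -(1/((K:ℝ) + 1 + ((K:ℝ) + 1) ^ 2)) := by
      ring
    rw [h2]
    linarith

/-- The eigenvector `(1, 1, …, 1, -(m-1))` for the eigenvalue `1/(m+1)`. -/
noncomputable def LOvec (m : ℕ) : Fin m → ℝ :=
  fun s => if (s : ℕ) = m - 1 then -((m:ℝ) - 1) else 1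

lemma locast (m : ℕ) (hm : 2 ≤ m) : ((m - 1 : ℕ) : ℝ) = (m:ℝ) - 1 := by
  have h1 : 1 ≤ m := by omega
  push_cast [Nat.cast_sub h1]
  ring

lemma lovec_eig (m : ℕ) (hm : 2 ≤ m) :
    (Lmat m).mulVec (LOvec m) = (1 / ((m : ℝ) + 1)) • (LOvec m) := by
  have hm0 : (0:ℝ) < (m:ℝ) := by exact_mod_cast Nat.lt_of_lt_of_le Nat.zero_lt_two hm
  have hm1 : (0:ℝ) < (m:ℝ) + 1 := by linarith
  have hlast : m - 1 < m := by omega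
  set last : Fin m := ⟨m - 1, hlast⟩ with hlastdef
  funext r
  have hsplit : ∀ s : Fin m, LOvec m s = 1 + (if s = last then -(m:ℝ) else 0) := by
    intro s
    rcases eq_or_ne s last with h | h
    · subst h; simp [LOvec, last]; ring
    · have h' : (s:ℕ) ≠ m - 1 := fun hh => h (Fin.ext hh)
      simp [LOvec, h, h']
  have hmv : (Lmat m).mulVec (LOvec m) r = -(m:ℝ) * Lmat m r last := by
    simp only [Matrix.mulVec, dotProduct]
    rw [Finset.sum_congr rfl (fun s _ => by rw [hsplit s])]
    simp_rw [mul_add, Finset.sum_add_distrib, mul_one, lmat_rowsum m hm, mul_ite, mul_zero,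
      Finset.sum_ite_eq' Finset.univ last]
    simp only [Finset.mem_univ, if_true, zero_add]
    ring
  rw [hmv]
  rcases eq_or_ne r last with h | h
  · subst h
    have hval : ((last : ℕ) : ℝ) = (m:ℝ) - 1 := by
      simp only [last]
      exact locast m hm
    rw [show Lmat m last last = (((last:ℕ):ℝ) + 1 - 1 - (((last:ℕ):ℝ) + 1) ^ 2) /
        ((((last:ℕ):ℝ) + 1) + (((last:ℕ):ℝ) + 1) ^ 2) + (m : ℝ) / ((m : ℝ) + 1) from by
      simp [Lmat]]
    rw [hval]
    have hv : LOvec m last = -((m:ℝ) - 1) := by simp [LOvec, last]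
    rw [Pi.smul_apply, hv, smul_eq_mul]
    have hd : ((m:ℝ) - 1 + 1) + ((m:ℝ) - 1 + 1) ^ 2 ≠ 0 := by
      have : ((m:ℝ) - 1 + 1) + ((m:ℝ) - 1 + 1) ^ 2 = (m:ℝ) + (m:ℝ)^2 := by ring
      rw [this]; positivity
    simp only [sub_add_cancel] at hd ⊢
    field_simp
    ring
  · have hKval : max (r:ℕ) ((last:ℕ)) = m - 1 := by
      have := r.2; simp only [last]; omega
    rw [show Lmat m r last = -1 / (((max (r:ℕ) ((last:ℕ)) : ℕ):ℝ) + 1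
        + (((max (r:ℕ) ((last:ℕ)) : ℕ):ℝ) + 1) ^ 2) from by simp [Lmat, h]]
    rw [hKval, locast m hm]
    have h' : (r:ℕ) ≠ m - 1 := fun hh => h (Fin.ext hh)
    have hv : LOvec m r = 1 := by simp [LOvec, h']
    rw [Pi.smul_apply, hv, smul_eq_mul]
    have hd : ((m:ℝ) - 1 + 1) + ((m:ℝ) - 1 + 1) ^ 2 ≠ 0 := by
      have : ((m:ℝ) - 1 + 1) + ((m:ℝ) - 1 + 1) ^ 2 = (m:ℝ) + (m:ℝ)^2 := by ring
      rw [this]; positivity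
    simp only [sub_add_cancel] at hd ⊢
    field_simp
    ring

/-- The `a_i` are strictly decreasing and positive, `a_{m-1} = 1/(m+1) < (m+3)/(2(m+1))`;
consequently `L` is positive semidefinite and its smallest nonzero eigenvalue is `1/(m+1)`,
which is strictly smaller than `(m+3)/(2(m+1))`. -/
theorem LOeig_properties (m : ℕ) (hm : 2 ≤ m) :
    (∀ i j : ℕ, 1 ≤ i → i < j → j ≤ m - 1 → LOeig m j < LOeig m i) ∧
    (∀ i : ℕ, 1 ≤ i → i ≤ m - 1 → 0 < LOeig m i) ∧
    LOeig m (m - 1) = 1 / ((m : ℝ) + 1) ∧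
    LOeig m (m - 1) < ((m : ℝ) + 3) / (2 * ((m : ℝ) + 1)) ∧
    (Lmat m).PosSemidef ∧
    (∃ v : Fin m → ℝ, v ≠ 0 ∧ (Lmat m).mulVec v = (1 / ((m : ℝ) + 1)) • v) ∧
    (∀ (μ : ℝ) (v : Fin m → ℝ), v ≠ 0 → (Lmat m).mulVec v = μ • v → μ ≠ 0 →
      1 / ((m : ℝ) + 1) ≤ μ) ∧
    1 / ((m : ℝ) + 1) < ((m : ℝ) + 3) / (2 * ((m : ℝ) + 1)) := by
  have hm0 : (0:ℝ) < (m:ℝ) := by exact_mod_cast Nat.lt_of_lt_of_le Nat.zero_lt_two hm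
  have hm1 : (0:ℝ) < (m:ℝ) + 1 := by linarith
  have hm2 : (2:ℝ) ≤ (m:ℝ) := by exact_mod_cast hm
  have hlast : LOeig m (m - 1) = 1 / ((m : ℝ) + 1) := by
    unfold LOeig
    rw [locast m hm]
    have h1 : (m:ℝ) - 1 + 2 = (m:ℝ) + 1 := by ring
    rw [h1]
    field_simp
    ring
  have hineq : 1 / ((m:ℝ) + 1) < ((m : ℝ) + 3) / (2 * ((m : ℝ) + 1)) := by
    rw [div_lt_div_iff₀ (by linarith) (by linarith)]
    nlinarith
  refine ⟨?_, ?_, hlast, ?_, lmat_psd m hm, ?_, ?_, hineq⟩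
  · intro i j hi hij hjm
    unfold LOeig
    have hij' : (i:ℝ) < (j:ℝ) := by exact_mod_cast hij
    have hi0 : (0:ℝ) ≤ (i:ℝ) := Nat.cast_nonneg i
    have : (i:ℝ) / ((i:ℝ) + 2) < (j:ℝ) / ((j:ℝ) + 2) := by
      rw [div_lt_div_iff₀ (by linarith) (by linarith)]
      nlinarith
    linarith
  · intro i hi him
    unfold LOeig
    have him' : (i:ℝ) ≤ (m:ℝ) - 1 := by
      rw [← locast m hm]; exact_mod_cast him
    have hi0 : (0:ℝ) ≤ (i:ℝ) := Nat.cast_nonneg i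
    have : (i:ℝ) / ((i:ℝ) + 2) < (m:ℝ) / ((m:ℝ) + 1) := by
      rw [div_lt_div_iff₀ (by linarith) (by linarith)]
      nlinarith
    linarith
  · rw [hlast]; exact hineq
  · refine ⟨LOvec m, ?_, lovec_eig m hm⟩
    intro h0
    have h1 : LOvec m ⟨0, by omega⟩ = 1 := by
      have : (0:ℕ) ≠ m - 1 := by omega
      simp [LOvec, this]
    rw [h0] at h1
    simp at h1
  · intro μ v hv hev hμ
    have hsum : ∑ s, v s = 0 := by
      have h1 : ∑ r, (Lmat m).mulVec v r = 0 := by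
        simp only [Matrix.mulVec, dotProduct]
        rw [Finset.sum_comm]
        have : ∀ s : Fin m, ∑ r, Lmat m r s * v s = 0 := by
          intro s
          rw [← Finset.sum_mul]
          rw [Finset.sum_congr rfl (fun r _ => lmat_symm m r s), lmat_rowsum m hm, zero_mul]
        exact Finset.sum_eq_zero (fun s _ => this s)
      have h2 : ∑ r, (Lmat m).mulVec v r = μ * ∑ r, v r := by
        rw [hev]
        simp [Finset.mul_sum]
      rw [h1] at h2
      rcases mul_eq_zero.mp h2.symm with h | h
      · exact absurd h hμ
      · exact h
    have hmv' : ∀ r, (Lmat' m).mulVec v r = (μ - 1/((m:ℝ)+1)) * v r := by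
      intro r
      have hLr : (Lmat m).mulVec v r = μ * v r := by
        rw [hev]; simp
      rw [Matrix.mulVec, dotProduct] at hLr
      simp only [Lmat', Matrix.mulVec, dotProduct]
      simp_rw [add_mul, Finset.sum_add_distrib, ite_mul, zero_mul,
        Finset.sum_ite_eq Finset.univ r]
      simp only [Finset.mem_univ, if_true]
      rw [hLr, ← Finset.mul_sum, hsum, mul_zero, add_zero]
      ring
    have hq : (0:ℝ) ≤ v ⬝ᵥ (Lmat' m).mulVec v := by
      have := (lmat'_psd m hm).dotProduct_mulVec_nonneg v
      simpa using this
    have hq2 : v ⬝ᵥ (Lmat' m).mulVec v = (μ - 1/((m:ℝ)+1)) * (v ⬝ᵥ v) := by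
      simp only [dotProduct]
      rw [Finset.sum_congr rfl (fun r _ => by rw [hmv' r]), Finset.mul_sum]
      exact Finset.sum_congr rfl (fun r _ => by ring)
    have hvv : (0:ℝ) < v ⬝ᵥ v := by
      have hnn : (0:ℝ) ≤ v ⬝ᵥ v := Finset.sum_nonneg fun r _ => mul_self_nonneg (v r)
      rcases hnn.lt_or_eq with h | h
      · exact h
      · exfalso
        exact hv (dotProduct_self_eq_zero.mp h.symm)
    nlinarith [hq2 ▸ hq]
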